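/- Let 𝓖 be a family of graphs on vertex set {1,…,n} (identified with their edge sets, as subsets of the edge set of Kₙ) such that for every G₁, G₂ ∈ 𝓖, the intersection G₁ ∩ G₂ contains a triangle. Then |𝓖| ≤ 2^{C(n,2) - 2}. -/

import Mathlib

open Finset

namespace TriIntersect
open NNReal

lemma mink {ι : Type*} (s : Finset ι) (α β : ι → ℝ≥0) (hs : s.card ≠ 0) :
    (∏ i ∈ s, α i) ^ ((s.card : ℝ)⁻¹) + (∏ i ∈ s, β i) ^ ((s.card : ℝ)⁻¹)
      ≤ (∏ i ∈ s, (α i + β i)) ^ ((s.card : ℝ)⁻¹) := by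
  by_cases h0 : ∃ i ∈ s, α i + β i = 0
  · obtain ⟨i, hi, hz⟩ := h0
    have hα : α i = 0 := by
      have := add_eq_zero.mp hz; exact this.1
    have hβ : β i = 0 := (add_eq_zero.mp hz).2
    have h1 : (∏ i ∈ s, α i) = 0 := Finset.prod_eq_zero hi hα
    have h2 : (∏ i ∈ s, β i) = 0 := Finset.prod_eq_zero hi hβ
    rw [h1, h2]
    rw [NNReal.zero_rpow (by positivity)]
    simp
  · push_neg at h0
    set γ : ι → ℝ≥0 := fun i => α i + β i with hγ
    have hγpos : ∀ i ∈ s, γ i ≠ 0 := fun i hi => h0 i hi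
    have hw : ∑ _i ∈ s, ((s.card : ℝ≥0))⁻¹ = 1 := by
      rw [Finset.sum_const, nsmul_eq_mul]
      rw [mul_inv_cancel₀ (by exact_mod_cast hs)]
    have hA := NNReal.geom_mean_le_arith_mean_weighted s (fun _ => ((s.card : ℝ≥0))⁻¹)
      (fun i => α i / γ i) hw
    have hB := NNReal.geom_mean_le_arith_mean_weighted s (fun _ => ((s.card : ℝ≥0))⁻¹)
      (fun i => β i / γ i) hw
    have hsum : (∏ i ∈ s, (α i / γ i) ^ ((s.card : ℝ)⁻¹))
        + (∏ i ∈ s, (β i / γ i) ^ ((s.card : ℝ)⁻¹)) ≤ 1 := by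
      have hcoe : ((((s.card : ℝ≥0)))⁻¹ : ℝ) = ((s.card : ℝ))⁻¹ := by push_cast; ring
      calc _ ≤ (∑ i ∈ s, ((s.card : ℝ≥0))⁻¹ * (α i / γ i))
              + (∑ i ∈ s, ((s.card : ℝ≥0))⁻¹ * (β i / γ i)) := by
              rw [← hcoe]; exact add_le_add hA hB
        _ = ∑ i ∈ s, ((s.card : ℝ≥0))⁻¹ * ((α i + β i) / γ i) := by
              rw [← Finset.sum_add_distrib]; congr 1; funext i; rw [← mul_add, add_div]
        _ = ∑ i ∈ s, ((s.card : ℝ≥0))⁻¹ := by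
              apply Finset.sum_congr rfl; intro i hi
              rw [div_self (hγpos i hi), mul_one]
        _ = 1 := hw
    have hprodpos : (∏ i ∈ s, γ i) ≠ 0 := Finset.prod_ne_zero_iff.mpr hγpos
    have hdiv : ∀ (δ : ι → ℝ≥0), (∏ i ∈ s, (δ i / γ i) ^ ((s.card : ℝ)⁻¹))
        = (∏ i ∈ s, δ i) ^ ((s.card : ℝ)⁻¹) / (∏ i ∈ s, γ i) ^ ((s.card : ℝ)⁻¹) := by
      intro δ
      rw [NNReal.finset_prod_rpow, Finset.prod_div_distrib, NNReal.div_rpow]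
    rw [hdiv, hdiv, ← add_div] at hsum
    have hZ : (∏ i ∈ s, γ i) ^ ((s.card : ℝ)⁻¹) ≠ 0 := by
      intro h
      exact hprodpos (NNReal.rpow_eq_zero_iff.mp h).1
    have := (div_le_iff₀ (hZ.bot_lt)).mp hsum
    simpa using this

lemma key {ι : Type*} [DecidableEq ι] (I S : Finset ι) (hSI : S ⊆ I) (k a b : ℕ) (hk : k ≠ 0)
    (hcard : k ≤ S.card) (α β γ : ι → ℕ)
    (h1 : ∀ i ∈ I, α i ≤ γ i) (h2 : ∀ i ∈ I, β i ≤ γ i)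
    (h3 : ∀ i ∈ S, α i + β i ≤ γ i)
    (ha : a ^ k ≤ ∏ i ∈ I, α i) (hb : b ^ k ≤ ∏ i ∈ I, β i) :
    (a + b) ^ k ≤ ∏ i ∈ I, γ i := by
  obtain ⟨S', hS'S, hS'card⟩ := Finset.exists_subset_card_eq hcard
  have hS'I : S' ⊆ I := hS'S.trans hSI
  set κ : ℝ := ((k : ℝ))⁻¹ with hκ
  have hkκ : (k : ℝ) * κ = 1 := mul_inv_cancel₀ (by exact_mod_cast hk)
  have hrpow_pow : ∀ x : ℝ≥0, (x ^ (k:ℕ)) ^ κ = x := by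
    intro x
    rw [← NNReal.rpow_natCast x k, ← NNReal.rpow_mul, hkκ, NNReal.rpow_one]
  have main : ∀ δ : ι → ℕ, (∀ i ∈ I, δ i ≤ γ i) → ∀ c : ℕ, c ^ k ≤ ∏ i ∈ I, δ i →
      (c : ℝ≥0) ≤ ((∏ i ∈ I \ S', (γ i : ℝ≥0)) * ∏ i ∈ S', (δ i : ℝ≥0)) ^ κ := by
    intro δ hδ c hc
    have h1' : ((c:ℝ≥0)) ^ (k:ℕ) ≤ (∏ i ∈ I \ S', (γ i : ℝ≥0)) * ∏ i ∈ S', (δ i : ℝ≥0) := by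
      calc ((c:ℝ≥0)) ^ (k:ℕ) ≤ ∏ i ∈ I, (δ i : ℝ≥0) := by
            rw [← Nat.cast_prod, ← Nat.cast_pow]; exact_mod_cast hc
        _ = (∏ i ∈ I \ S', (δ i : ℝ≥0)) * ∏ i ∈ S', (δ i : ℝ≥0) := (Finset.prod_sdiff hS'I).symm
        _ ≤ _ := by
            apply mul_le_mul_left
            apply Finset.prod_le_prod'
            intro i hi
            exact_mod_cast hδ i (Finset.sdiff_subset hi)
    calc (c : ℝ≥0) = ((c:ℝ≥0) ^ (k:ℕ)) ^ κ := (hrpow_pow _).symm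
      _ ≤ _ := NNReal.rpow_le_rpow h1' (by positivity)
  have hka := main α h1 a ha
  have hkb := main β h2 b hb
  set M : ℝ≥0 := ∏ i ∈ I \ S', (γ i : ℝ≥0) with hM
  have hmink := mink S' (fun i => (α i : ℝ≥0)) (fun i => (β i : ℝ≥0))
    (by rw [hS'card]; exact hk)
  rw [hS'card] at hmink
  have step : ((a : ℝ≥0)) + b ≤ (∏ i ∈ I, (γ i : ℝ≥0)) ^ κ := by
    calc ((a : ℝ≥0)) + b ≤ (M * ∏ i ∈ S', (α i : ℝ≥0)) ^ κ + (M * ∏ i ∈ S', (β i : ℝ≥0)) ^ κ :=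
          add_le_add hka hkb
      _ = M ^ κ * ((∏ i ∈ S', (α i : ℝ≥0)) ^ κ + (∏ i ∈ S', (β i : ℝ≥0)) ^ κ) := by
          rw [NNReal.mul_rpow, NNReal.mul_rpow, mul_add]
      _ ≤ M ^ κ * (∏ i ∈ S', ((α i : ℝ≥0) + (β i : ℝ≥0))) ^ κ := by
          exact mul_le_mul_right hmink _
      _ ≤ M ^ κ * (∏ i ∈ S', (γ i : ℝ≥0)) ^ κ := by
          apply mul_le_mul_right
          apply NNReal.rpow_le_rpow ?_ (by positivity)
          apply Finset.prod_le_prod'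
          intro i hi
          have := h3 i (hS'S hi)
          exact_mod_cast this
      _ = (M * ∏ i ∈ S', (γ i : ℝ≥0)) ^ κ := (NNReal.mul_rpow).symm
      _ = (∏ i ∈ I, (γ i : ℝ≥0)) ^ κ := by rw [hM, Finset.prod_sdiff hS'I]
  have final : ((a + b : ℕ) : ℝ≥0) ^ (k:ℕ) ≤ ∏ i ∈ I, (γ i : ℝ≥0) := by
    calc ((a + b : ℕ) : ℝ≥0) ^ (k:ℕ) = ((a:ℝ≥0) + b) ^ (k:ℕ) := by push_cast; ring
      _ ≤ ((∏ i ∈ I, (γ i : ℝ≥0)) ^ κ) ^ (k:ℕ) := pow_le_pow_left' step k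
      _ = ∏ i ∈ I, (γ i : ℝ≥0) := by
          rw [← NNReal.rpow_natCast _ k, ← NNReal.rpow_mul, hκ, inv_mul_cancel₀
            (by exact_mod_cast hk : (k:ℝ) ≠ 0), NNReal.rpow_one]
  rw [← Nat.cast_prod, ← Nat.cast_pow] at final
  exact_mod_cast final

variable {E : Type*} [DecidableEq E] [Fintype E]

def proj (A : Finset E) (f : E → Bool) : E → Bool := fun e => f e && decide (e ∈ A)


theorem shearer {ι : Type*} [DecidableEq ι] (I : Finset ι) (F : ι → Finset E) (k : ℕ) (hk : k ≠ 0)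
    (U : Finset E) :
    ∀ 𝓕 : Finset (E → Bool), (∀ f ∈ 𝓕, ∀ e, f e = true → e ∈ U) →
      (∀ e ∈ U, k ≤ (I.filter (fun i => e ∈ F i)).card) →
      𝓕.card ^ k ≤ ∏ i ∈ I, (𝓕.image (proj (F i))).card := by
  induction U using Finset.induction_on with
  | empty =>
    intro 𝓕 hsupp _
    rcases 𝓕.eq_empty_or_nonempty with h | ⟨f0, hf0⟩
    · subst h
      simp [Nat.zero_pow (Nat.pos_of_ne_zero hk)]
    · have hsub : 𝓕 ⊆ {fun _ => false} := by
        intro f hf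
        rw [Finset.mem_singleton]
        funext e
        by_contra h
        exact absurd (hsupp f hf e (by revert h; cases f e <;> simp)) (by simp)
      calc 𝓕.card ^ k ≤ 1 ^ k := Nat.pow_le_pow_left
            (le_trans (Finset.card_le_card hsub) (by simp)) k
        _ = 1 := one_pow k
        _ ≤ _ := Finset.one_le_prod' fun i _ => Nat.one_le_iff_ne_zero.mpr
            (Finset.card_ne_zero_of_mem (Finset.mem_image_of_mem _ hf0))
  | @insert x U' hxU ih =>
    intro 𝓕 hsupp hcov
    classical
    set 𝓕₀ := 𝓕.filter (fun f => f x = false) with h𝓕₀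
    set 𝓕₁ := 𝓕.filter (fun f => f x = true) with h𝓕₁
    set clr : (E → Bool) → (E → Bool) := fun f => Function.update f x false with hclr
    set 𝓕₁' := 𝓕₁.image clr with h𝓕₁'
    have hcard_split : 𝓕.card = 𝓕₀.card + 𝓕₁.card := by
      rw [h𝓕₀, h𝓕₁]
      rw [← Finset.card_filter_add_card_filter_not (p := fun f => f x = false)]
      congr 1
      simp only [Bool.not_eq_false]
    have hinj₁ : Set.InjOn clr ↑𝓕₁ := by
      intro f hf g hg hfg
      have hfx : f x = true := (Finset.mem_filter.mp hf).2
      have hgx : g x = true := (Finset.mem_filter.mp hg).2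
      funext e
      by_cases he : e = x
      · subst he; rw [hfx, hgx]
      · have h1 : clr f e = f e := Function.update_of_ne he false f
        have h2 : clr g e = g e := Function.update_of_ne he false g
        rw [← h1, ← h2, hfg]
    have hconj : ∀ (A : Finset E) (f : E → Bool),
        proj A (clr f) = Function.update (proj A f) x false := by
      intro A f
      funext e
      by_cases he : e = x
      · subst he
        rw [Function.update_self]
        show (clr f e && decide (e ∈ A)) = false
        rw [show clr f e = false from Function.update_self e false f]
        simp
      · rw [Function.update_of_ne he]
        show (clr f e && decide (e ∈ A)) = (f e && decide (e ∈ A))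
        rw [show clr f e = f e from Function.update_of_ne he false f]
    have himage : ∀ A : Finset E, 𝓕₁'.image (proj A)
        = (𝓕₁.image (proj A)).image (fun u => Function.update u x false) := by
      intro A
      rw [h𝓕₁', Finset.image_image, Finset.image_image]
      apply Finset.image_congr
      intro f _
      exact hconj A f
    have hsupp₀ : ∀ f ∈ 𝓕₀, ∀ e, f e = true → e ∈ U' := by
      intro f hf e hfe
      have hfx := (Finset.mem_filter.mp hf).2
      rcases Finset.mem_insert.mp (hsupp f (Finset.mem_filter.mp hf).1 e hfe) with h | h
      · subst h; rw [hfx] at hfe; exact absurd hfe (by simp)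
      · exact h
    have hsupp₁' : ∀ f ∈ 𝓕₁', ∀ e, f e = true → e ∈ U' := by
      intro g hg e hge
      obtain ⟨f, hf, rfl⟩ := Finset.mem_image.mp hg
      by_cases he : e = x
      · subst he
        rw [show clr f e = false from Function.update_self e false f] at hge
        exact absurd hge (by simp)
      · have hfe : f e = true := by
          rw [← show clr f e = f e from Function.update_of_ne he false f]; exact hge
        rcases Finset.mem_insert.mp (hsupp f (Finset.mem_filter.mp hf).1 e hfe) with h | h
        · exact absurd h he
        · exact h
    have hcov' : ∀ e ∈ U', k ≤ (I.filter (fun i => e ∈ F i)).card :=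
      fun e he => hcov e (Finset.mem_insert_of_mem he)
    have ihA := ih 𝓕₀ hsupp₀ hcov'
    have ihB := ih 𝓕₁' hsupp₁' hcov'
    set S := I.filter (fun i => x ∈ F i) with hS
    have h1 : ∀ i ∈ I, (𝓕₀.image (proj (F i))).card ≤ (𝓕.image (proj (F i))).card :=
      fun i _ => Finset.card_le_card (Finset.image_subset_image (Finset.filter_subset _ _))
    have h2 : ∀ i ∈ I, (𝓕₁'.image (proj (F i))).card ≤ (𝓕.image (proj (F i))).card := by
      intro i _
      rw [himage (F i)]
      calc ((𝓕₁.image (proj (F i))).image (fun u => Function.update u x false)).card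
          ≤ (𝓕₁.image (proj (F i))).card := Finset.card_image_le
        _ ≤ _ := Finset.card_le_card (Finset.image_subset_image (Finset.filter_subset _ _))
    have h3 : ∀ i ∈ S, (𝓕₀.image (proj (F i))).card + (𝓕₁'.image (proj (F i))).card
        ≤ (𝓕.image (proj (F i))).card := by
      intro i hi
      have hxF : x ∈ F i := (Finset.mem_filter.mp hi).2
      have hβ : (𝓕₁'.image (proj (F i))).card = (𝓕₁.image (proj (F i))).card := by
        rw [himage (F i)]
        apply Finset.card_image_of_injOn
        intro u hu v hv huv
        have hux : u x = true := by
          obtain ⟨f, hf, rfl⟩ := Finset.mem_image.mp (Finset.mem_coe.mp hu)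
          show (f x && decide (x ∈ F i)) = true
          rw [(Finset.mem_filter.mp hf).2]; simp [hxF]
        have hvx : v x = true := by
          obtain ⟨f, hf, rfl⟩ := Finset.mem_image.mp (Finset.mem_coe.mp hv)
          show (f x && decide (x ∈ F i)) = true
          rw [(Finset.mem_filter.mp hf).2]; simp [hxF]
        funext e
        by_cases he : e = x
        · subst he; rw [hux, hvx]
        · rw [← Function.update_of_ne he false u, ← Function.update_of_ne he false v]
          exact congrFun huv e
      rw [hβ]
      have hdisj : Disjoint (𝓕₀.image (proj (F i))) (𝓕₁.image (proj (F i))) := by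
        rw [Finset.disjoint_left]
        intro u hu0 hu1
        obtain ⟨f, hf, rfl⟩ := Finset.mem_image.mp hu0
        obtain ⟨g, hg, heq⟩ := Finset.mem_image.mp hu1
        have hz : proj (F i) f x = false := by
          show (f x && decide (x ∈ F i)) = false
          rw [(Finset.mem_filter.mp hf).2]; simp
        have ho : proj (F i) g x = true := by
          show (g x && decide (x ∈ F i)) = true
          rw [(Finset.mem_filter.mp hg).2]; simp [hxF]
        rw [heq, hz] at ho
        exact absurd ho (by simp)
      calc (𝓕₀.image (proj (F i))).card + (𝓕₁.image (proj (F i))).card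
          = ((𝓕₀.image (proj (F i))) ∪ (𝓕₁.image (proj (F i)))).card :=
            (Finset.card_union_of_disjoint hdisj).symm
        _ ≤ _ := Finset.card_le_card (Finset.union_subset
            (Finset.image_subset_image (Finset.filter_subset _ _))
            (Finset.image_subset_image (Finset.filter_subset _ _)))
    have hScard : k ≤ S.card := hcov x (Finset.mem_insert_self x U')
    calc 𝓕.card ^ k = (𝓕₀.card + 𝓕₁'.card) ^ k := by
          rw [hcard_split, h𝓕₁', Finset.card_image_of_injOn hinj₁]
      _ ≤ _ := key I S (Finset.filter_subset _ _) k _ _ hk hScard _ _ _ h1 h2 h3 ihA ihB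

lemma supp_mem_powerset (A : Finset E) (f : E → Bool) (h : ∀ e, f e = true → e ∈ A) :
    f ∈ (A.powerset).image (fun T => fun e => decide (e ∈ T)) := by
  rw [Finset.mem_image]
  refine ⟨A.filter (fun e => f e = true), Finset.mem_powerset.mpr (Finset.filter_subset _ _), ?_⟩
  funext e
  by_cases hf : f e = true
  · rw [hf]
    simp [Finset.mem_filter, hf, h e hf]
  · simp only [Bool.not_eq_true] at hf
    rw [hf]
    simp [Finset.mem_filter, hf]

lemma card_supp (A : Finset E) :
    ((A.powerset).image (fun T => fun e => decide (e ∈ T))).card = 2 ^ A.card := by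
  rw [Finset.card_image_of_injOn, Finset.card_powerset]
  intro T hT T' hT' h
  ext e
  have := congrFun h e
  simpa using this

lemma intersecting_bound (A : Finset E) (P : Finset (E → Bool))
    (hsupp : ∀ f ∈ P, ∀ e, f e = true → e ∈ A)
    (hint : ∀ f ∈ P, ∀ g ∈ P, ∃ e, f e = true ∧ g e = true) :
    2 * P.card ≤ 2 ^ A.card := by
  classical
  set c : (E → Bool) → (E → Bool) := fun f => fun e => !(f e) && decide (e ∈ A) with hc
  have hinj : Set.InjOn c ↑P := by
    intro f hf g hg hfg
    funext e
    by_cases he : e ∈ A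
    · have := congrFun hfg e
      simp only [hc, he, decide_true, Bool.and_true] at this
      exact Bool.not_inj this
    · rw [show f e = false by
        cases hfe : f e
        · rfl
        · exact absurd (hsupp f (Finset.mem_coe.mp hf) e hfe) he]
      rw [show g e = false by
        cases hge : g e
        · rfl
        · exact absurd (hsupp g (Finset.mem_coe.mp hg) e hge) he]
  have hdisj : Disjoint P (P.image c) := by
    rw [Finset.disjoint_right]
    intro g hg hgP
    obtain ⟨f, hf, rfl⟩ := Finset.mem_image.mp hg
    obtain ⟨e, hfe, hce⟩ := hint f hf (c f) hgP
    rw [hc] at hce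
    simp only [hfe] at hce
    simp at hce
  have hsub : P ∪ P.image c ⊆ (A.powerset).image (fun T => fun e => decide (e ∈ T)) := by
    intro f hf
    rcases Finset.mem_union.mp hf with h | h
    · exact supp_mem_powerset A f (hsupp f h)
    · obtain ⟨g, hg, rfl⟩ := Finset.mem_image.mp h
      apply supp_mem_powerset
      intro e he
      rw [hc] at he
      rcases (Bool.and_eq_true _ _).mp he with ⟨_, h2⟩
      exact of_decide_eq_true h2
  calc 2 * P.card = P.card + (P.image c).card := by
        rw [Finset.card_image_of_injOn hinj]; ring
    _ = (P ∪ P.image c).card := (Finset.card_union_of_disjoint hdisj).symm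
    _ ≤ _ := le_trans (Finset.card_le_card hsub) (le_of_eq (card_supp A))

lemma count_sameside {n : ℕ} (u v : Fin n) (huv : u ≠ v)
    [inst : DecidablePred fun S : Finset (Fin n) => (u ∈ S ↔ v ∈ S)] :
    ((Finset.univ : Finset (Finset (Fin n))).filter
      (fun S => (u ∈ S ↔ v ∈ S))).card = 2 ^ (n - 1) := by
  classical
  have key : ((Finset.univ : Finset (Finset (Fin n))).filter (fun S => (u ∈ S ↔ v ∈ S))).card
      = ((Finset.univ : Finset (Finset (Fin n))).filter (fun S => ¬(u ∈ S ↔ v ∈ S))).card := by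
    apply Finset.card_bij' (fun S _ => symmDiff S {u}) (fun S _ => symmDiff S {u})
    · intro S _
      exact symmDiff_symmDiff_cancel_right {u} S
    · intro S _
      exact symmDiff_symmDiff_cancel_right {u} S
    · intro S hS
      rw [Finset.mem_filter] at hS ⊢
      refine ⟨Finset.mem_univ _, ?_⟩
      have hu : u ∈ symmDiff S {u} ↔ ¬ (u ∈ S) := by
        simp [Finset.mem_symmDiff]
      have hvu : v ≠ u := huv.symm
      have hv : v ∈ symmDiff S {u} ↔ v ∈ S := by
        simp only [Finset.mem_symmDiff, Finset.mem_singleton]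
        tauto
      rw [hu, hv]
      tauto
    · intro S hS
      rw [Finset.mem_filter] at hS ⊢
      refine ⟨Finset.mem_univ _, ?_⟩
      have hu : u ∈ symmDiff S {u} ↔ ¬ (u ∈ S) := by
        simp [Finset.mem_symmDiff]
      have hvu : v ≠ u := huv.symm
      have hv : v ∈ symmDiff S {u} ↔ v ∈ S := by
        simp only [Finset.mem_symmDiff, Finset.mem_singleton]
        tauto
      rw [hu, hv]
      tauto
  have hsum := Finset.card_filter_add_card_filter_not
    (s := (Finset.univ : Finset (Finset (Fin n)))) (p := fun S => (u ∈ S ↔ v ∈ S))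
  rw [← key] at hsum
  have huniv : (Finset.univ : Finset (Finset (Fin n))).card = 2 ^ n := by
    rw [Finset.card_univ, Fintype.card_finset, Fintype.card_fin]
  have hn : 1 ≤ n := Nat.pos_of_ne_zero (by rintro rfl; exact absurd u.2 (by simp))
  have : 2 * ((Finset.univ : Finset (Finset (Fin n))).filter
      (fun S => (u ∈ S ↔ v ∈ S))).card = 2 * 2 ^ (n-1) := by
    rw [two_mul, hsum, huniv, ← pow_succ', Nat.sub_add_cancel hn]
  omega

lemma pigeon3 {α : Type*} (p : α → Prop) (i j k : α) (hij : i ≠ j) (hik : i ≠ k) (hjk : j ≠ k) :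
    ∃ u v, u ≠ v ∧ (p u ↔ p v) ∧
      ((u = i ∧ v = j) ∨ (u = i ∧ v = k) ∨ (u = j ∧ v = k)) := by
  by_cases h1 : p i ↔ p j
  · exact ⟨i, j, hij, h1, Or.inl ⟨rfl, rfl⟩⟩
  by_cases h2 : p i ↔ p k
  · exact ⟨i, k, hik, h2, Or.inr (Or.inl ⟨rfl, rfl⟩)⟩
  · exact ⟨j, k, hjk, by tauto, Or.inr (Or.inr ⟨rfl, rfl⟩)⟩

end TriIntersect

open TriIntersect

/-- If every two members of a family `𝓖` of graphs on vertex set `[n]` share a common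
triangle, then `|𝓖| ≤ 2^{C(n,2)-2}`. -/
theorem triangle_intersecting_family (n : ℕ) (𝓖 : Finset (SimpleGraph (Fin n)))
    (htri : ∀ G₁ ∈ 𝓖, ∀ G₂ ∈ 𝓖, ∃ i j k : Fin n,
      i ≠ j ∧ i ≠ k ∧ j ≠ k ∧
      (G₁ ⊓ G₂).Adj i j ∧ (G₁ ⊓ G₂).Adj i k ∧ (G₁ ⊓ G₂).Adj j k) :
    𝓖.card ≤ 2 ^ (n.choose 2 - 2) := by
  classical
  rcases 𝓖.eq_empty_or_nonempty with rfl | ⟨G₀, hG₀⟩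
  · simp
  obtain ⟨i0, j0, k0, hij0, hik0, hjk0, -, -, -⟩ := htri G₀ hG₀ G₀ hG₀
  have hn3 : 3 ≤ n := by
    calc 3 = ({i0, j0, k0} : Finset (Fin n)).card := by
          rw [Finset.card_insert_of_notMem (by simp [hij0, hik0]),
            Finset.card_insert_of_notMem (by simp [hjk0]), Finset.card_singleton]
      _ ≤ (Finset.univ : Finset (Fin n)).card := Finset.card_le_univ _
      _ = n := by rw [Finset.card_univ, Fintype.card_fin]
  have hn1 : 1 ≤ n := le_trans (by norm_num) hn3
  set m := n.choose 2 with hmdef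
  have hm : 3 ≤ m := by
    calc 3 = Nat.choose 3 2 := by norm_num
      _ ≤ m := Nat.choose_le_choose 2 hn3
  -- encoding
  set φ : SimpleGraph (Fin n) → (Sym2 (Fin n) → Bool) :=
    fun G e => decide (e ∈ G.edgeSet) with hφ
  have hφe : ∀ G e, φ G e = true ↔ e ∈ G.edgeSet := by
    intro G e; rw [hφ]; simp
  set 𝓕 : Finset (Sym2 (Fin n) → Bool) := 𝓖.image φ with h𝓕
  have hcardF : 𝓕.card = 𝓖.card := by
    rw [h𝓕]
    apply Finset.card_image_of_injOn
    intro G hG G' hG' h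
    apply SimpleGraph.edgeSet_inj.mp
    ext e
    constructor
    · intro he; exact (hφe G' e).mp (by rw [← congrFun h e]; exact (hφe G e).mpr he)
    · intro he; exact (hφe G e).mp (by rw [congrFun h e]; exact (hφe G' e).mpr he)
  set U : Finset (Sym2 (Fin n)) := Finset.univ.filter (fun e => ¬ e.IsDiag) with hU
  have hUcard : U.card = m := by
    have h1 : U.card = Fintype.card {a : Sym2 (Fin n) // ¬ a.IsDiag} := by
      rw [hU, ← Fintype.card_subtype]
    rw [h1, Sym2.card_subtype_not_diag, Fintype.card_fin, hmdef]
  have hrs : ∀ S : Finset (Fin n), Std.Symm (fun a b : Fin n => (a ∈ S ↔ b ∈ S)) :=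
    fun _ => ⟨fun _ _ h => h.symm⟩
  set F : Finset (Fin n) → Finset (Sym2 (Fin n)) := fun S =>
    U.filter (fun e => e ∈ Sym2.fromRel (hrs S)) with hF
  set k := 2 ^ (n - 1) with hk
  have hkne : k ≠ 0 := by positivity
  -- exact coverage count
  have hcount : ∀ e ∈ U, ((Finset.univ : Finset (Finset (Fin n))).filter
      (fun S => e ∈ F S)).card = k := by
    intro e he
    induction e using Sym2.inductionOn with
    | hf u v =>
      have huv : u ≠ v := by
        intro h
        rw [hU, Finset.mem_filter] at he
        exact he.2 (by rw [h]; exact Sym2.mk_isDiag_iff.mpr rfl)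
      have hsame : ∀ S : Finset (Fin n), (s(u,v) ∈ F S) ↔ (u ∈ S ↔ v ∈ S) := by
        intro S
        rw [hF, Finset.mem_filter]
        constructor
        · intro h
          exact (Sym2.fromRel_prop (sym := hrs S) (a := u) (b := v)).mp h.2
        · intro h
          exact ⟨he, (Sym2.fromRel_prop (sym := hrs S) (a := u) (b := v)).mpr h⟩
      have heq : ((Finset.univ : Finset (Finset (Fin n))).filter (fun S => s(u,v) ∈ F S))
          = ((Finset.univ : Finset (Finset (Fin n))).filter (fun S => (u ∈ S ↔ v ∈ S))) :=
        Finset.filter_congr (fun S _ => by rw [hsame S])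
      rw [heq, hk]
      exact count_sameside u v huv
  have hsuppF : ∀ f ∈ 𝓕, ∀ e, f e = true → e ∈ U := by
    intro f hf e hfe
    rw [h𝓕] at hf
    obtain ⟨G, hG, rfl⟩ := Finset.mem_image.mp hf
    rw [hU, Finset.mem_filter]
    exact ⟨Finset.mem_univ _, SimpleGraph.not_isDiag_of_mem_edgeSet G ((hφe G e).mp hfe)⟩
  have hcov : ∀ e ∈ U, k ≤ ((Finset.univ : Finset (Finset (Fin n))).filter
      (fun S => e ∈ F S)).card := fun e he => le_of_eq (hcount e he).symm
  have hshear := shearer (Finset.univ : Finset (Finset (Fin n))) F k hkne U 𝓕 hsuppF hcov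
  have hper : ∀ S : Finset (Fin n), 2 * ((𝓕.image (proj (F S)))).card ≤ 2 ^ (F S).card := by
    intro S
    apply intersecting_bound
    · intro f hf e hfe
      obtain ⟨g, hg, rfl⟩ := Finset.mem_image.mp hf
      exact of_decide_eq_true ((Bool.and_eq_true _ _).mp hfe).2
    · intro f hf g hg
      obtain ⟨f₁, hf₁, rfl⟩ := Finset.mem_image.mp hf
      obtain ⟨g₁, hg₁, rfl⟩ := Finset.mem_image.mp hg
      rw [h𝓕] at hf₁ hg₁
      obtain ⟨G₁, hG₁, rfl⟩ := Finset.mem_image.mp hf₁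
      obtain ⟨G₂, hG₂, rfl⟩ := Finset.mem_image.mp hg₁
      obtain ⟨i, j, l, hij, hil, hjl, ha1, ha2, ha3⟩ := htri G₁ hG₁ G₂ hG₂
      obtain ⟨u, v, huv, husame, hcase⟩ := pigeon3 (fun x => x ∈ S) i j l hij hil hjl
      have heU : s(u, v) ∈ U := by
        rw [hU, Finset.mem_filter]
        exact ⟨Finset.mem_univ _, by rw [Sym2.mk_isDiag_iff]; exact huv⟩
      have heF : s(u, v) ∈ F S := by
        rw [hF]
        exact Finset.mem_filter.mpr
          ⟨heU, (Sym2.fromRel_prop (sym := hrs S) (a := u) (b := v)).mpr husame⟩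
      have hAdj : G₁.Adj u v ∧ G₂.Adj u v := by
        rcases hcase with ⟨rfl, rfl⟩ | ⟨rfl, rfl⟩ | ⟨rfl, rfl⟩
        · exact ⟨ha1.1, ha1.2⟩
        · exact ⟨ha2.1, ha2.2⟩
        · exact ⟨ha3.1, ha3.2⟩
      refine ⟨s(u, v), ?_, ?_⟩
      · show (φ G₁ s(u,v) && decide (s(u,v) ∈ F S)) = true
        rw [(hφe G₁ s(u,v)).mpr ((SimpleGraph.mem_edgeSet G₁).mpr hAdj.1)]
        simp [heF]
      · show (φ G₂ s(u,v) && decide (s(u,v) ∈ F S)) = true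
        rw [(hφe G₂ s(u,v)).mpr ((SimpleGraph.mem_edgeSet G₂).mpr hAdj.2)]
        simp [heF]
  have hsum : ∑ S ∈ (Finset.univ : Finset (Finset (Fin n))), (F S).card = m * k := by
    have hFcard : ∀ S : Finset (Fin n), (F S).card = ∑ e ∈ U, ite (e ∈ F S) 1 0 := by
      intro S
      rw [← Finset.card_filter]
      congr 1
      have hsub : F S ⊆ U := by rw [hF]; exact Finset.filter_subset _ _
      ext e
      constructor
      · intro h
        exact Finset.mem_filter.mpr ⟨hsub h, h⟩
      · intro h
        exact (Finset.mem_filter.mp h).2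
    calc ∑ S ∈ (Finset.univ : Finset (Finset (Fin n))), (F S).card
        = ∑ S ∈ (Finset.univ : Finset (Finset (Fin n))), ∑ e ∈ U, ite (e ∈ F S) 1 0 :=
          Finset.sum_congr rfl (fun S _ => hFcard S)
      _ = ∑ e ∈ U, ∑ S ∈ (Finset.univ : Finset (Finset (Fin n))), ite (e ∈ F S) 1 0 :=
          Finset.sum_comm
      _ = ∑ e ∈ U, ((Finset.univ : Finset (Finset (Fin n))).filter
            (fun S => e ∈ F S)).card := by
          apply Finset.sum_congr rfl
          intro e _
          rw [Finset.card_filter]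
      _ = ∑ e ∈ U, k := Finset.sum_congr rfl hcount
      _ = m * k := by rw [Finset.sum_const, hUcard, smul_eq_mul]
  have h2n : 2 ^ n = 2 * k := by
    rw [hk, ← pow_succ', Nat.sub_add_cancel hn1]
  have hfinal : 𝓕.card ^ k * 2 ^ (2 * k) ≤ 2 ^ (m * k) := by
    calc 𝓕.card ^ k * 2 ^ (2 * k) = 2 ^ (2 ^ n) * 𝓕.card ^ k := by rw [h2n, mul_comm]
      _ ≤ 2 ^ (2 ^ n) * ∏ S ∈ (Finset.univ : Finset (Finset (Fin n))),
            (𝓕.image (proj (F S))).card := Nat.mul_le_mul_left _ hshear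
      _ = ∏ S ∈ (Finset.univ : Finset (Finset (Fin n))),
            (2 * (𝓕.image (proj (F S))).card) := by
          rw [Finset.prod_mul_distrib, Finset.prod_const, Finset.card_univ,
            Fintype.card_finset, Fintype.card_fin]
      _ ≤ ∏ S ∈ (Finset.univ : Finset (Finset (Fin n))), 2 ^ (F S).card :=
          Finset.prod_le_prod' (fun S _ => hper S)
      _ = 2 ^ (m * k) := by rw [Finset.prod_pow_eq_pow_sum, hsum]
  have hpow : (𝓕.card * 4) ^ k ≤ (2 ^ m) ^ k := by
    calc (𝓕.card * 4) ^ k = 𝓕.card ^ k * 2 ^ (2 * k) := by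
          rw [mul_pow, show (4 : ℕ) = 2 ^ 2 by norm_num, ← pow_mul]
      _ ≤ 2 ^ (m * k) := hfinal
      _ = (2 ^ m) ^ k := pow_mul 2 m k
  have h4 : 𝓕.card * 4 ≤ 2 ^ m :=
    (Nat.pow_le_pow_iff_left (a := 𝓕.card * 4) (b := 2 ^ m) hkne).mp hpow
  have hsplit : 2 ^ m = 2 ^ (m - 2) * 4 := by
    rw [show (4 : ℕ) = 2 ^ 2 by norm_num, ← pow_add, Nat.sub_add_cancel (by omega)]
  rw [hsplit] at h4
  rw [← hcardF]
  exact Nat.le_of_mul_le_mul_right h4 (by norm_num)
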